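/- Fix T > 0 and 0 ≤ σ₀ < σ̄. Let E : [σ₀,σ̄] → ℝ be continuous, differentiable and strictly convex on an interval (a,σ̄) with σ₀ ≤ a < σ̄. Let σ : [0,T] → [σ₀,σ̄) be left-continuous and satisfy conditions (b′) and (c′). If t ∈ (0,T) is such that σ(t) ∈ (a,σ̄) and 1 + t²·E′(σ(t)) ≥ 0, then σ is right-continuous (hence continuous) at t, i.e. lim_{s→t⁺} σ(s) = σ(t). -/

import Mathlib

open Set

/-- Proposition 5.5: the crack length cannot jump while inside a strict convexity
interval of the energy. -/
theorem no_jump_in_convexity_interval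
    (T σ₀ σmax a : ℝ) (hT : 0 < T) (h0 : 0 ≤ σ₀) (h1 : σ₀ < σmax)
    (ha : σ₀ ≤ a) (ha' : a < σmax)
    (E : ℝ → ℝ) (hE : ContinuousOn E (Icc σ₀ σmax))
    (E' : ℝ → ℝ)
    (hdiff : ∀ x ∈ Ioo a σmax, HasDerivWithinAt E (E' x) (Ioo a σmax) x)
    (hconv : StrictConvexOn ℝ (Ioo a σmax) E)
    (σ : ℝ → ℝ)
    (hmap : ∀ t ∈ Icc (0:ℝ) T, σ t ∈ Ico σ₀ σmax)
    (hlc : ∀ t ∈ Ioc (0:ℝ) T, ContinuousWithinAt σ (Iio t) t)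
    (hb' : MonotoneOn σ (Icc 0 T))
    (hc' : ∀ s t : ℝ, 0 ≤ s → s < t → t ≤ T →
      t ^ 2 * E (σ t) + σ t ≤ s ^ 2 * E (σ s) + σ s + 2 * ∫ τ in s..t, τ * E (σ τ))
    (t : ℝ) (ht : t ∈ Ioo 0 T)
    (hσt : σ t ∈ Ioo a σmax)
    (hstab : 0 ≤ 1 + t ^ 2 * E' (σ t)) :
    Filter.Tendsto σ (nhdsWithin t (Ioi t)) (nhds (σ t)) := by
  obtain ⟨ht0, htT⟩ := ht
  -- extend σ monotonically to all of ℝ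
  set σ' : ℝ → ℝ := fun u => σ (max 0 (min u T)) with hσ'def
  have hclamp : ∀ u, max 0 (min u T) ∈ Icc (0:ℝ) T := fun u =>
    ⟨le_max_left _ _, max_le hT.le (min_le_right _ _)⟩
  have hmono : Monotone σ' := fun u v huv =>
    hb' (hclamp u) (hclamp v) (max_le_max le_rfl (min_le_min_right _ huv))
  have hσ'eq : ∀ u ∈ Icc (0:ℝ) T, σ' u = σ u := by
    intro u hu
    simp only [hσ'def]
    rw [min_eq_left hu.2, max_eq_right hu.1]
  set L : ℝ := sInf (σ' '' Ioi t) with hLdef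
  have htendL' : Filter.Tendsto σ' (nhdsWithin t (Ioi t)) (nhds L) :=
    hmono.tendsto_nhdsGT t
  have hIoo : Ioo t T ∈ nhdsWithin t (Ioi t) := Ioo_mem_nhdsGT htT
  have heqev : σ' =ᶠ[nhdsWithin t (Ioi t)] σ := by
    filter_upwards [hIoo] with u hu
    exact hσ'eq u ⟨(ht0.trans hu.1).le, hu.2.le⟩
  have htendL : Filter.Tendsto σ (nhdsWithin t (Ioi t)) (nhds L) := htendL'.congr' heqev
  have hσ't : σ' t = σ t := hσ'eq t ⟨ht0.le, htT.le⟩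
  -- σ t ≤ L
  have hle : σ t ≤ L := by
    apply le_csInf ((nonempty_Ioi (a := t)).image σ')
    rintro b ⟨u, hu, rfl⟩
    rw [← hσ't]; exact hmono (le_of_lt hu)
  -- L < σmax
  have hmid : t < (t + T) / 2 := by linarith
  have hmidT : (t + T) / 2 < T := by linarith
  have hLlt : L < σmax := by
    have h1' : L ≤ σ' ((t + T) / 2) :=
      csInf_le ⟨σ t, by rintro b ⟨u, hu, rfl⟩; rw [← hσ't]; exact hmono hu.le⟩
        ⟨(t + T) / 2, hmid, rfl⟩
    have h2' : σ' ((t + T) / 2) = σ ((t + T) / 2) :=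
      hσ'eq _ ⟨by linarith, hmidT.le⟩
    have := (hmap ((t + T) / 2) ⟨by linarith, hmidT.le⟩).2
    linarith
  have hσtmem : σ t ∈ Icc σ₀ σmax := by
    have := hmap t ⟨ht0.le, htT.le⟩
    exact ⟨this.1, this.2.le⟩
  have hLmem : L ∈ Icc σ₀ σmax := ⟨hσtmem.1.trans hle, hLlt.le⟩
  -- bound on E on the compact interval
  obtain ⟨M, hM⟩ := (isCompact_Icc (a := σ₀) (b := σmax)).exists_bound_of_continuousOn hE
  have hM0 : 0 ≤ M := le_trans (norm_nonneg _) (hM (σ t) hσtmem)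
  -- the integral term tends to 0
  have hint : Filter.Tendsto (fun u => 2 * ∫ τ in t..u, τ * E (σ τ))
      (nhdsWithin t (Ioi t)) (nhds 0) := by
    apply squeeze_zero_norm' (a := fun u => 2 * (T * M) * (u - t))
    · filter_upwards [hIoo] with u hu
      have hb : ‖∫ τ in t..u, τ * E (σ τ)‖ ≤ T * M * |u - t| := by
        apply intervalIntegral.norm_integral_le_of_norm_le_const
        intro x hx
        rw [uIoc_of_le hu.1.le] at hx
        have hx0 : 0 < x := ht0.trans hx.1
        have hxT : x ≤ T := hx.2.trans hu.2.le
        have hσx := hmap x ⟨hx0.le, hxT⟩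
        have hEx : ‖E (σ x)‖ ≤ M := hM _ ⟨hσx.1, hσx.2.le⟩
        calc ‖x * E (σ x)‖ = ‖x‖ * ‖E (σ x)‖ := norm_mul _ _
          _ ≤ T * M := by
              apply mul_le_mul _ hEx (norm_nonneg _) hT.le
              rw [Real.norm_eq_abs, abs_of_pos hx0]; exact hxT
      have habs : |u - t| = u - t := abs_of_pos (by linarith [hu.1])
      rw [norm_mul]
      calc ‖(2:ℝ)‖ * ‖∫ τ in t..u, τ * E (σ τ)‖ ≤ 2 * (T * M * |u - t|) := by
            rw [Real.norm_eq_abs, abs_of_pos (by norm_num : (0:ℝ) < 2)]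
            exact mul_le_mul_of_nonneg_left hb (by norm_num)
        _ = 2 * (T * M) * (u - t) := by rw [habs]; ring
    · have : Filter.Tendsto (fun u : ℝ => 2 * (T * M) * (u - t)) (nhds t) (nhds 0) := by
        have := (continuous_const.mul (continuous_id.sub continuous_const) : Continuous fun u : ℝ => 2 * (T * M) * (u - t)).tendsto t
        convert this using 2
        case e'_3 => rfl
        case e'_5 =>
          show (0:ℝ) = 2 * (T * M) * (t - t)
          ring
      exact this.mono_left nhdsWithin_le_nhds
  -- pass to the limit in (c')
  have hEcont : Filter.Tendsto (fun u => E (σ u)) (nhdsWithin t (Ioi t)) (nhds (E L)) := by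
    have h1' : Filter.Tendsto σ (nhdsWithin t (Ioi t)) (nhdsWithin L (Icc σ₀ σmax)) := by
      rw [tendsto_nhdsWithin_iff]
      refine ⟨htendL, ?_⟩
      filter_upwards [hIoo] with u hu
      have := hmap u ⟨(ht0.trans hu.1).le, hu.2.le⟩
      exact ⟨this.1, this.2.le⟩
    exact ((hE L hLmem).tendsto).comp h1'
  have hsq : Filter.Tendsto (fun u : ℝ => u ^ 2) (nhdsWithin t (Ioi t)) (nhds (t ^ 2)) :=
    ((continuous_pow 2).tendsto t).mono_left nhdsWithin_le_nhds
  have hLHS : Filter.Tendsto (fun u => u ^ 2 * E (σ u) + σ u) (nhdsWithin t (Ioi t))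
      (nhds (t ^ 2 * E L + L)) := (hsq.mul hEcont).add htendL
  have hRHS : Filter.Tendsto (fun u => t ^ 2 * E (σ t) + σ t + 2 * ∫ τ in t..u, τ * E (σ τ))
      (nhdsWithin t (Ioi t)) (nhds (t ^ 2 * E (σ t) + σ t + 0)) :=
    tendsto_const_nhds.add hint
  have hkey : t ^ 2 * E L + L ≤ t ^ 2 * E (σ t) + σ t + 0 := by
    refine le_of_tendsto_of_tendsto hLHS hRHS ?_
    filter_upwards [hIoo] with u hu
    exact hc' t u ht0.le hu.1 hu.2.le
  -- conclude L = σ t by strict convexity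
  have hLσt : L = σ t := by
    by_contra hne
    have hlt : σ t < L := lt_of_le_of_ne hle (Ne.symm hne)
    have hLIoo : L ∈ Ioo a σmax := ⟨hσt.1.trans_le hle, hLlt⟩
    -- E' (σ t) < slope from σ t to L
    have hslope : E' (σ t) < (E L - E (σ t)) / (L - σ t) := by
      set c := σ t with hc
      set m := (c + L) / 2 with hm
      have hcm : c < m := by simp only [hm]; linarith
      have hmL : m < L := by simp only [hm]; linarith
      have hmmem : m ∈ Ioo a σmax := ⟨hσt.1.trans hcm, hmL.trans hLlt⟩
      have hd : HasDerivWithinAt E (E' c) (Ioo c σmax) c :=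
        (hdiff c hσt).mono (Ioo_subset_Ioo_left hσt.1.le)
      rw [hasDerivWithinAt_iff_tendsto_slope] at hd
      have hd' : Filter.Tendsto (slope E c) (nhdsWithin c (Ioi c)) (nhds (E' c)) := by
        have hsub : nhdsWithin c (Ioo c σmax \ {c}) = nhdsWithin c (Ioi c) := by
          rw [diff_singleton_eq_self (by simp)]
          exact nhdsWithin_Ioo_eq_nhdsGT hσt.2
        rwa [hsub] at hd
      have h1' : E' c ≤ slope E c m := by
        refine le_of_tendsto hd' ?_
        have hmem : Ioo c m ∈ nhdsWithin c (Ioi c) := Ioo_mem_nhdsGT hcm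
        filter_upwards [hmem] with y hy
        have hy1 : y ∈ Ioo a σmax := ⟨hσt.1.trans hy.1, hy.2.trans (hmL.trans hLlt)⟩
        have := hconv.secant_strict_mono hσt hy1 hmmem (ne_of_gt hy.1) (ne_of_gt hcm) hy.2
        simp only [slope_def_field]
        exact this.le
      have h2' : slope E c m < slope E c L := by
        have := hconv.secant_strict_mono hσt hmmem hLIoo (ne_of_gt hcm)
          (ne_of_gt (hcm.trans hmL)) hmL
        simp only [slope_def_field]
        exact this
      calc E' c ≤ slope E c m := h1'
        _ < slope E c L := h2'
        _ = (E L - E c) / (L - c) := slope_def_field E c L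
    have hpos : 0 < L - σ t := by linarith
    have h3' : E' (σ t) * (L - σ t) < E L - E (σ t) := by
      calc E' (σ t) * (L - σ t) < (E L - E (σ t)) / (L - σ t) * (L - σ t) := by
            exact (mul_lt_mul_iff_of_pos_right hpos).2 hslope
        _ = E L - E (σ t) := by field_simp
    have ht2 : 0 < t ^ 2 := pow_pos ht0 2
    nlinarith [mul_nonneg hstab hpos.le]
  rw [← hLσt]
  exact htendL
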